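/- Let G ∈ H^∞_{m×p} with T_G T_G* strictly positive, and suppose G is a matrix polynomial of degree at most d, i.e. G_ν = 0 for all ν > d. Then the function z ↦ Y(z)⁻¹ is a matrix polynomial in z of degree at most d. -/

import Mathlib

/-!
Setting: `l2 n` models ℓ²₊(ℂⁿ); `lp.single 2 0` is the canonical embedding `E_n`, and
evaluating a sequence at coordinate `k` realizes `E_n* (S_n*)^k`.  Block Toeplitz and
Hankel operators, as well as the (bounded) inverse of `T_G T_G*`, are specified through
their actions on the standard basis vectors of the coordinate spaces.
-/

noncomputable section
open scoped Matrix

/-- ℂⁿ with the Euclidean norm. -/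
abbrev ES (n : ℕ) : Type := EuclideanSpace ℂ (Fin n)

/-- ℓ²₊(ℂⁿ). -/
abbrev l2 (n : ℕ) : Type := lp (fun _ : ℕ => ES n) 2

/-- The `b`-th standard basis vector of ℂⁿ. -/
abbrev eVec (n : ℕ) (b : Fin n) : ES n := EuclideanSpace.single b 1

/-- The matrix function `z ↦ ∑' ν, z ^ ν • F ν` determined by a coefficient sequence. -/
def seriesM {r s : ℕ} (F : ℕ → Matrix (Fin r) (Fin s) ℂ) (z : ℂ) :
    Matrix (Fin r) (Fin s) ℂ :=
  Matrix.of fun a b => ∑' ν : ℕ, z ^ ν * F ν a b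

open scoped ENNReal

namespace Bezout19

/-- coordinate evaluation as a continuous linear map -/
def ev (n k : ℕ) : l2 n →L[ℂ] ES n :=
  LinearMap.mkContinuous
    { toFun := fun x => x k
      map_add' := fun x y => congrFun (lp.coeFn_add x y) k
      map_smul' := fun c x => congrFun (lp.coeFn_smul c x) k }
    1 (fun x => by
      simpa using lp.norm_apply_le_norm (by norm_num) x k)

@[simp] lemma ev_apply {n : ℕ} (k : ℕ) (x : l2 n) : ev n k x = x k := rfl

lemma memℓp_shift {n : ℕ} (x : l2 n) : Memℓp (fun k => x (k + 1)) (2 : ℝ≥0∞) := by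
  apply memℓp_gen
  have h := ((lp.hasSum_norm (E := fun _ : ℕ => ES n) (by norm_num) x).summable)
  exact (summable_nat_add_iff 1).mpr h

/-- the backward shift `S*` as a continuous linear map -/
def D (n : ℕ) : l2 n →L[ℂ] l2 n :=
  LinearMap.mkContinuous
    { toFun := fun x => ⟨fun k => x (k + 1), memℓp_shift x⟩
      map_add' := fun x y => by
        apply lp.ext; funext k
        exact congrFun (lp.coeFn_add x y) (k+1)
      map_smul' := fun c x => by
        apply lp.ext; funext k
        exact congrFun (lp.coeFn_smul c x) (k+1) }
    1 (fun x => by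
      rw [one_mul]
      have hpos : (0:ℝ) < ((2 : ℝ≥0∞)).toReal := by norm_num
      have h1 : ‖(⟨fun k => x (k + 1), memℓp_shift x⟩ : l2 n)‖ ^ ((2 : ℝ≥0∞)).toReal
          ≤ ‖x‖ ^ ((2 : ℝ≥0∞)).toReal := by
        rw [lp.norm_rpow_eq_tsum hpos, lp.norm_rpow_eq_tsum hpos]
        have hsum := ((lp.hasSum_norm hpos x).summable)
        rw [Summable.tsum_eq_zero_add hsum]
        have hnn : (0:ℝ) ≤ ‖x 0‖ ^ ((2 : ℝ≥0∞)).toReal :=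
          Real.rpow_nonneg (norm_nonneg (x 0)) _
        have : (∑' k, ‖(⟨fun j => x (j + 1), memℓp_shift x⟩ : l2 n) k‖ ^ ((2 : ℝ≥0∞)).toReal)
            = ∑' k, ‖x (k+1)‖ ^ ((2 : ℝ≥0∞)).toReal := rfl
        rw [this]
        linarith
      by_contra hc
      push_neg at hc
      have h2 := Real.rpow_lt_rpow (norm_nonneg x) hc hpos
      exact absurd h1 (by
        simp only [LinearMap.coe_mk, AddHom.coe_mk] at h2 ⊢
        linarith))

@[simp] lemma D_apply {n : ℕ} (x : l2 n) (k : ℕ) : D n x k = x (k + 1) := rfl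

lemma coe_sum_apply {n : ℕ} {ι : Type*} (s : Finset ι) (f : ι → l2 n) (k : ℕ) :
    (∑ i ∈ s, f i : l2 n) k = ∑ i ∈ s, (f i) k :=
  map_sum (ev n k) f s

lemma coe_smul_apply {n : ℕ} (c : ℂ) (x : l2 n) (k : ℕ) :
    (c • x : l2 n) k = c • x k :=
  congrFun (lp.coeFn_smul c x) k

lemma single_sum {n : ℕ} {ι : Type*} (j : ℕ) (s : Finset ι) (f : ι → ES n) :
    (lp.single (E := fun _ : ℕ => ES n) 2 j (∑ i ∈ s, f i))
      = ∑ i ∈ s, lp.single (E := fun _ : ℕ => ES n) 2 j (f i) := by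
  classical
  induction s using Finset.induction with
  | empty =>
      simp only [Finset.sum_empty]
      apply lp.ext; funext k
      by_cases h : k = j <;> simp [lp.single_apply, h, lp.coeFn_zero]
  | insert _ _ hni ih =>
      rw [Finset.sum_insert hni, Finset.sum_insert hni, ← ih]
      apply lp.ext; funext k
      rw [lp.coeFn_add]
      by_cases h : k = j <;> simp [lp.single_apply, h]

/-- decompose a Euclidean vector along the standard basis -/
lemma es_decomp {n : ℕ} (w : ES n) : w = ∑ b, (w b) • eVec n b := by
  ext a
  rw [WithLp.ofLp_sum, Finset.sum_apply]
  simp [eVec, EuclideanSpace.single_apply]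

lemma single_decomp {n : ℕ} (j : ℕ) (w : ES n) :
    (lp.single (E := fun _ : ℕ => ES n) 2 j w)
      = ∑ b, (w b) • lp.single (E := fun _ : ℕ => ES n) 2 j (eVec n b) := by
  conv_lhs => rw [es_decomp w]
  rw [single_sum]
  exact Finset.sum_congr rfl fun b _ =>
    lp.single_smul (E := fun _ : ℕ => ES n) 2 j (w b) (eVec n b)

lemma clm_ext_single {n : ℕ} {X : Type*} [NormedAddCommGroup X] [NormedSpace ℂ X]
    {T1 T2 : l2 n →L[ℂ] X}
    (h : ∀ (j : ℕ) (w : ES n), T1 (lp.single 2 j w) = T2 (lp.single 2 j w)) : T1 = T2 := by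
  ext x
  have hx := lp.hasSum_single (E := fun _ : ℕ => ES n) (by norm_num) x
  have h1 := hx.mapL T1
  have h2 := hx.mapL T2
  simp only [h] at h1
  exact h1.unique h2

lemma D_single_succ {n : ℕ} (j : ℕ) (w : ES n) :
    D n (lp.single (E := fun _ : ℕ => ES n) 2 (j+1) w)
      = lp.single (E := fun _ : ℕ => ES n) 2 j w := by
  apply lp.ext; funext k
  rw [D_apply]
  by_cases h : k = j
  · subst h; simp [lp.single_apply]
  · rw [lp.single_apply_ne _ _ _ h, lp.single_apply_ne]
    simpa using h

lemma D_single_zero {n : ℕ} (w : ES n) :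
    D n (lp.single (E := fun _ : ℕ => ES n) 2 0 w) = 0 := by
  apply lp.ext; funext k
  rw [D_apply, lp.single_apply_ne _ _ _ (Nat.succ_ne_zero k), lp.coeFn_zero]
  rfl

/-- `lp.single 2 j` as a continuous linear map -/
def sgl (n j : ℕ) : ES n →L[ℂ] l2 n :=
  LinearMap.mkContinuous
    { toFun := fun w => lp.single (E := fun _ : ℕ => ES n) 2 j w
      map_add' := fun v w => by
        have := single_sum (n := n) j Finset.univ ![v, w]
        apply lp.ext; funext k
        by_cases h : k = j
        · subst h; simp [lp.single_apply]
        · rw [lp.single_apply_ne _ _ _ h, lp.coeFn_add, Pi.add_apply,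
            lp.single_apply_ne _ _ _ h, lp.single_apply_ne _ _ _ h]
          simp
      map_smul' := fun c w => by
        simpa using lp.single_smul (E := fun _ : ℕ => ES n) 2 j w c }
    1 (fun w => by
      have := lp.norm_single (E := fun _ : ℕ => ES n) (p := 2) (by norm_num)
        j w
      simpa using this.le)

@[simp] lemma sgl_apply {n : ℕ} (j : ℕ) (w : ES n) :
    sgl n j w = lp.single (E := fun _ : ℕ => ES n) 2 j w := rfl

lemma coord_eq_inner {n : ℕ} (x : l2 n) (k : ℕ) (b : Fin n) :
    x k b = inner (𝕜 := ℂ) (lp.single 2 k (eVec n b)) x := by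
  rw [lp.inner_single_left]
  simp [eVec, EuclideanSpace.inner_single_left]

end Bezout19

open Bezout19
set_option maxHeartbeats 1000000

/-- If `G ∈ H^∞_{m×p}` with `T_G T_G*` strictly positive is a matrix
polynomial of degree at most `d` (`G_ν = 0` for `ν > d`), then `z ↦ Y(z)⁻¹` is a matrix
polynomial of degree at most `d`. -/
theorem bezout_corona_stmt19
    (m p : ℕ) (hm : 0 < m) (hmp : m ≤ p)
    (G : ℕ → Matrix (Fin m) (Fin p) ℂ)
    (TG : l2 p →L[ℂ] l2 m)
    (hTG : ∀ (j : ℕ) (b : Fin p) (i : ℕ) (a : Fin m),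
      (TG (lp.single 2 j (eVec p b))) i a = if j ≤ i then G (i - j) a b else 0)
    (HG : l2 p →L[ℂ] l2 m)
    (hHG : ∀ (j : ℕ) (b : Fin p) (i : ℕ) (a : Fin m),
      (HG (lp.single 2 j (eVec p b))) i a = G (i + j + 1) a b)
    (Tinv : l2 m →L[ℂ] l2 m)
    (hT1 : ∀ x, Tinv (TG (TG.adjoint x)) = x)
    (hT2 : ∀ x, TG (TG.adjoint (Tinv x)) = x)
    (Y : ℂ → Matrix (Fin p) (Fin p) ℂ)
    (hY : ∀ z ∈ Metric.ball (0 : ℂ) 1, ∀ (a b : Fin p),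
      Y z a b = (if a = b then 1 else 0)
        - z * ∑' i : ℕ, z ^ i *
            (TG.adjoint (Tinv (HG (lp.single 2 0 (eVec p b))))) i a)
    (d : ℕ)
    (hGd : ∀ ν, d < ν → G ν = 0) :
    ∃ W : ℕ → Matrix (Fin p) (Fin p) ℂ,
      (∀ ν, d < ν → W ν = 0) ∧
      ∀ z ∈ Metric.ball (0 : ℂ) 1,
        (Y z)⁻¹ = ∑ ν ∈ Finset.range (d + 1), z ^ ν • W ν := by
  classical
  -- generalized coordinate formulas
  have hTG' : ∀ (j : ℕ) (w : ES p) (i : ℕ) (a : Fin m),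
      (TG (lp.single 2 j w)) i a
        = if j ≤ i then ∑ b, G (i - j) a b * w b else 0 := by
    intro j w i a
    rw [single_decomp, map_sum, coe_sum_apply, WithLp.ofLp_sum, Finset.sum_apply]
    have : ∀ b : Fin p, (TG ((w b) • lp.single 2 j (eVec p b))) i a
        = (if j ≤ i then G (i - j) a b * w b else 0) := by
      intro b
      rw [map_smul, coe_smul_apply, PiLp.smul_apply, smul_eq_mul, hTG]
      by_cases h : j ≤ i <;> simp [h, mul_comm]
    rw [Finset.sum_congr rfl fun b _ => this b]
    by_cases h : j ≤ i <;> simp [h]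
  have hHG' : ∀ (j : ℕ) (w : ES p) (i : ℕ) (a : Fin m),
      (HG (lp.single 2 j w)) i a = ∑ b, G (i + j + 1) a b * w b := by
    intro j w i a
    rw [single_decomp, map_sum, coe_sum_apply, WithLp.ofLp_sum, Finset.sum_apply]
    refine Finset.sum_congr rfl fun b _ => ?_
    rw [map_smul, coe_smul_apply, PiLp.smul_apply, smul_eq_mul, hHG, mul_comm]
  -- vanishing of deep Hankel columns
  have hHvanish : ∀ (j : ℕ), d ≤ j → ∀ (w : ES p), HG (lp.single 2 j w) = 0 := by
    intro j hj w
    apply lp.ext; funext i; ext a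
    rw [lp.coeFn_zero, Pi.zero_apply, hHG']
    refine (Finset.sum_eq_zero fun b _ => ?_)
    rw [hGd (i + j + 1) (by omega)]
    simp
  -- the operator A = T* Q H
  set Aop : l2 p →L[ℂ] l2 p := (TG.adjoint.comp Tinv).comp HG with hAopDef
  have hAop : ∀ x, Aop x = TG.adjoint (Tinv (HG x)) := fun x => rfl
  have hAvanish : ∀ (j : ℕ), d ≤ j → ∀ (w : ES p), Aop (lp.single 2 j w) = 0 := by
    intro j hj w
    rw [hAop, hHvanish j hj w, map_zero, map_zero]
  -- Hankel intertwining: H ∘ S = S* ∘ H on singles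
  have hHshift : ∀ (j : ℕ) (w : ES p),
      HG (lp.single 2 (j+1) w) = D m (HG (lp.single 2 j w)) := by
    intro j w
    apply lp.ext; funext i; ext a
    rw [D_apply, hHG', hHG']
    refine Finset.sum_congr rfl fun b _ => ?_
    congr 2
    omega
  -- I1 : D ∘ T = T ∘ D + H ∘ (single 0) ∘ (ev 0)
  have I1 : ∀ (x : l2 p), D m (TG x) = TG (D p x) + HG (lp.single 2 0 (x 0)) := by
    have key : (D m).comp TG
        = TG.comp (D p) + HG.comp ((sgl p 0).comp (ev p 0)) := by
      apply clm_ext_single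
      intro j w
      simp only [ContinuousLinearMap.comp_apply, ContinuousLinearMap.add_apply, sgl_apply,
        ev_apply]
      cases j with
      | zero =>
          rw [D_single_zero, map_zero, zero_add, lp.single_apply_self]
          apply lp.ext; funext i; ext a
          rw [D_apply, hTG', hHG']
          simp
      | succ j =>
          rw [D_single_succ, lp.single_apply_ne _ _ _ (Nat.succ_ne_zero j).symm]
          have : lp.single (E := fun _ : ℕ => ES p) 2 0 (0 : ES p) = 0 :=
            map_zero (sgl p 0)
          rw [this, map_zero, add_zero]
          apply lp.ext; funext i; ext a
          rw [D_apply, hTG', hTG']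
          rcases le_or_gt j i with h | h
          · simp [h, Nat.succ_le_succ h, Nat.succ_sub_succ]
          · have h1 : ¬ (j + 1 ≤ i + 1) := by omega
            have h2 : ¬ (j ≤ i) := by omega
            simp [h1, h2]
    intro x
    have h := ContinuousLinearMap.ext_iff.mp key x
    simpa using h
  -- I2 : T* ∘ S* = S* ∘ T*
  have I2 : ∀ (y : l2 m), TG.adjoint (D m y) = D p (TG.adjoint y) := by
    intro y
    apply lp.ext; funext k; ext b
    have e1 : (TG.adjoint (D m y)) k b
        = inner (𝕜 := ℂ) (TG (lp.single 2 k (eVec p b))) (D m y) := by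
      rw [coord_eq_inner, ContinuousLinearMap.adjoint_inner_right]
    have e2 : (D p (TG.adjoint y)) k b
        = inner (𝕜 := ℂ) (TG (lp.single 2 (k+1) (eVec p b))) y := by
      rw [D_apply, coord_eq_inner, ContinuousLinearMap.adjoint_inner_right]
    rw [e1, e2, lp.inner_eq_tsum, lp.inner_eq_tsum]
    have hs := lp.summable_inner (𝕜 := ℂ) (TG (lp.single 2 (k+1) (eVec p b))) y
    rw [Summable.tsum_eq_zero_add hs]
    have h0 : (TG (lp.single 2 (k+1) (eVec p b))) 0 = 0 := by
      ext a; rw [hTG]; simp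
    rw [h0, inner_zero_left, zero_add]
    refine tsum_congr fun i => ?_
    have harg : (TG (lp.single 2 (k+1) (eVec p b))) (i+1)
        = (TG (lp.single 2 k (eVec p b))) i := by
      ext a; rw [hTG, hTG]
      rcases le_or_gt k i with h | h
      · simp [h, Nat.succ_le_succ h, Nat.succ_sub_succ]
      · have h1 : ¬ (k + 1 ≤ i + 1) := by omega
        have h2 : ¬ (k ≤ i) := by omega
        simp [h1, h2]
    rw [harg]
    rfl
  -- commutator identity for Tinv with the backward shift
  have QD : ∀ (y : l2 m), Tinv (D m y)
      = D m (Tinv y) + Tinv (HG (lp.single 2 0 ((TG.adjoint (Tinv y)) 0))) := by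
    intro y
    have h1 : D m y = TG (TG.adjoint (D m (Tinv y)))
        + HG (lp.single 2 0 ((TG.adjoint (Tinv y)) 0)) := by
      conv_lhs => rw [← hT2 y]
      rw [I1 (TG.adjoint (Tinv y)), I2]
    rw [h1, map_add, hT1]
  -- KEY recursion
  have KEY : ∀ (j : ℕ) (w : ES p),
      Aop (lp.single 2 (j+1) w)
        = D p (Aop (lp.single 2 j w))
          + Aop (lp.single 2 0 ((Aop (lp.single 2 j w)) 0)) := by
    intro j w
    rw [hAop, hHshift j w, QD, map_add, I2, hAop, hAop]
  -- the coefficient vectors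
  set β : ℕ → Fin p → ES p := fun j c => (Aop (lp.single 2 j (eVec p c))) 0 with hβ
  have hβ' : ∀ j c, (Aop (lp.single 2 j (eVec p c))) 0 = β j c := fun j c => rfl
  have hl2zero : ∀ k : ℕ, ((0 : l2 p) k) = 0 := by
    intro k
    rw [lp.coeFn_zero]
    rfl
  have hβvanish : ∀ j, d ≤ j → ∀ c, β j c = 0 := by
    intro j hj c
    rw [← hβ', hAvanish j hj, hl2zero]
  have KEYβ : ∀ (j : ℕ) (c : Fin p),
      Aop (lp.single 2 (j+1) (eVec p c))
        = D p (Aop (lp.single 2 j (eVec p c))) + Aop (lp.single 2 0 (β j c)) := by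
    intro j c
    rw [KEY j (eVec p c), hβ']
  refine ⟨fun ν => if ν = 0 then 1 else Matrix.of fun a c => β (ν - 1) c a, ?_, ?_⟩
  · -- vanishing of high coefficients
    intro ν hν
    have hν0 : ν ≠ 0 := by omega
    simp only [hν0, if_false]
    ext a c
    rw [Matrix.of_apply, hβvanish (ν - 1) (by omega) c]
    rfl
  · intro z hz0
    have hz : ‖z‖ < 1 := by rwa [Metric.mem_ball, dist_zero_right] at hz0
    -- summability of the coordinate power series
    have hgeo : Summable (fun k : ℕ => ‖z‖ ^ k) :=
      summable_geometric_of_lt_one (norm_nonneg z) hz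
    have hsumm : ∀ (x : l2 p) (a : Fin p), Summable (fun k : ℕ => z ^ k * (x k) a) := by
      intro x a
      refine Summable.of_norm (Summable.of_nonneg_of_le
        (fun k => norm_nonneg _) (fun k => ?_) (hgeo.mul_left ‖x‖))
      rw [norm_mul, norm_pow]
      have h1 : ‖(x k) a‖ ≤ ‖x k‖ := by
        have hi := EuclideanSpace.inner_single_left (𝕜 := ℂ) a 1 (x k)
        calc ‖(x k) a‖ = ‖inner (𝕜 := ℂ) (EuclideanSpace.single a (1:ℂ)) (x k)‖ := by
              rw [hi]; simp
        _ ≤ ‖EuclideanSpace.single a (1:ℂ)‖ * ‖x k‖ := norm_inner_le_norm _ _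
        _ = ‖x k‖ := by rw [EuclideanSpace.norm_single]; simp
      have h2 : ‖x k‖ ≤ ‖x‖ := lp.norm_apply_le_norm (by norm_num) x k
      calc ‖z‖ ^ k * ‖(x k) a‖ ≤ ‖z‖ ^ k * ‖x‖ := by
            have := pow_nonneg (norm_nonneg z) k
            nlinarith
      _ = ‖x‖ * ‖z‖ ^ k := mul_comm _ _
    -- the coordinate generating function
    set F : l2 p → Fin p → ℂ := fun x a => ∑' k, z ^ k * (x k) a with hFdef
    have Fzero : ∀ a, F (0 : l2 p) a = 0 := by
      intro a
      rw [hFdef]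
      simp only [hl2zero]
      simp
    have Fadd : ∀ (x y : l2 p) (a : Fin p), F (x + y) a = F x a + F y a := by
      intro x y a
      rw [hFdef]
      calc (∑' k, z ^ k * ((x + y) k) a)
          = ∑' k, (z ^ k * (x k) a + z ^ k * (y k) a) := by
            refine tsum_congr fun k => ?_
            rw [congrFun (lp.coeFn_add x y) k, Pi.add_apply, PiLp.add_apply, mul_add]
      _ = _ := Summable.tsum_add (hsumm x a) (hsumm y a)
    have Fshift : ∀ (x : l2 p) (a : Fin p), F x a = (x 0) a + z * F (D p x) a := by
      intro x a
      rw [hFdef]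
      simp only []
      rw [Summable.tsum_eq_zero_add (hsumm x a), pow_zero, one_mul, ← tsum_mul_left]
      congr 1
      refine tsum_congr fun k => ?_
      rw [D_apply]
      ring
    -- decomposition of F ∘ Aop ∘ single 0 along the basis
    have Fdecomp : ∀ (w : ES p) (a : Fin p),
        F (Aop (lp.single 2 0 w)) a
          = ∑ b, w b * F (Aop (lp.single 2 0 (eVec p b))) a := by
      intro w a
      conv_lhs => rw [single_decomp (n := p) 0 w]
      rw [map_sum, hFdef]
      calc (∑' k, z ^ k * ((∑ b, Aop ((w b) • lp.single (E := fun _ : ℕ => ES p) 2 0 (eVec p b))) k) a)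
          = ∑' k, ∑ b, w b * (z ^ k * ((Aop (lp.single (E := fun _ : ℕ => ES p) 2 0 (eVec p b))) k) a) := by
            refine tsum_congr fun k => ?_
            rw [coe_sum_apply, WithLp.ofLp_sum, Finset.sum_apply, Finset.mul_sum]
            refine Finset.sum_congr rfl fun b _ => ?_
            rw [map_smul, coe_smul_apply, PiLp.smul_apply, smul_eq_mul]
            ring
      _ = ∑ b, w b * ∑' k, z ^ k * ((Aop (lp.single (E := fun _ : ℕ => ES p) 2 0 (eVec p b))) k) a := by
            rw [Summable.tsum_finsetSum (fun b _ =>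
              (hsumm (Aop (lp.single (E := fun _ : ℕ => ES p) 2 0 (eVec p b))) a).mul_left (w b))]
            exact Finset.sum_congr rfl fun b _ => tsum_mul_left
    -- the matrix entries of the series part of Y
    set fm : Fin p → Fin p → ℂ := fun a b => F (Aop (lp.single 2 0 (eVec p b))) a with hfm
    have hYz : ∀ a b : Fin p, Y z a b = (if a = b then 1 else 0) - z * fm a b := by
      intro a b
      rw [hY z hz0 a b]
      rfl
    -- one step of the recursion, after applying F
    have step : ∀ (j : ℕ) (c a : Fin p),
        z * F (Aop (lp.single 2 (j+1) (eVec p c))) a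
          = F (Aop (lp.single 2 j (eVec p c))) a - (β j c) a
            + z * ∑ b, (β j c) b * fm a b := by
      intro j c a
      rw [KEYβ j c, Fadd, Fdecomp (β j c) a, mul_add]
      have hs := Fshift (Aop (lp.single 2 j (eVec p c))) a
      rw [hβ'] at hs
      have hzF : z * F (D p (Aop (lp.single 2 j (eVec p c)))) a
          = F (Aop (lp.single 2 j (eVec p c))) a - (β j c) a := by
        linear_combination -hs
      rw [hzF, hfm]
    -- telescoping
    have tele : ∀ (c a : Fin p),
        (∑ j ∈ Finset.range d, z ^ j * (β j c) a)
          = fm a c + ∑ j ∈ Finset.range d, z ^ (j+1) * ∑ b, (β j c) b * fm a b := by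
      intro c a
      have h2 := Finset.sum_range_sub
        (f := fun j => z ^ j * F (Aop (lp.single 2 j (eVec p c))) a) d
      have h3 : ∀ j ∈ Finset.range d,
          (z ^ (j+1) * F (Aop (lp.single 2 (j+1) (eVec p c))) a
            - z ^ j * F (Aop (lp.single 2 j (eVec p c))) a)
          = - (z ^ j * (β j c) a)
            + z ^ (j+1) * ∑ b, (β j c) b * fm a b := by
        intro j _
        have := step j c a
        linear_combination z ^ j * this
      rw [Finset.sum_congr rfl h3, Finset.sum_add_distrib] at h2
      have h4 : z ^ d * F (Aop (lp.single 2 d (eVec p c))) a = 0 := by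
        rw [hAvanish d le_rfl, Fzero, mul_zero]
      have h5 : z ^ 0 * F (Aop (lp.single 2 0 (eVec p c))) a = fm a c := by
        rw [pow_zero, one_mul, hfm]
      rw [h4, h5, Finset.sum_neg_distrib] at h2
      linear_combination - h2
    -- conclude by exhibiting a right inverse
    apply Matrix.inv_eq_right_inv
    ext a c
    have hP : ∀ b : Fin p,
        (∑ ν ∈ Finset.range (d + 1), z ^ ν •
            (if ν = 0 then (1 : Matrix (Fin p) (Fin p) ℂ)
              else Matrix.of fun a c => β (ν - 1) c a)) b c
          = (if b = c then 1 else 0)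
            + ∑ j ∈ Finset.range d, z ^ (j+1) * (β j c) b := by
      intro b
      rw [Matrix.sum_apply, Finset.sum_range_succ']
      simp only [Matrix.smul_apply, smul_eq_mul, Nat.succ_ne_zero, if_false,
        Nat.add_sub_cancel, if_true, pow_zero, one_mul, Matrix.of_apply]
      rw [Matrix.one_apply]
      exact add_comm _ _
    rw [Matrix.mul_apply, Matrix.one_apply]
    have hexp : ∀ b : Fin p,
        Y z a b * (∑ ν ∈ Finset.range (d + 1), z ^ ν •
            (if ν = 0 then (1 : Matrix (Fin p) (Fin p) ℂ)
              else Matrix.of fun a c => β (ν - 1) c a)) b c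
        = ((if a = b then (1:ℂ) else 0) * (if b = c then (1:ℂ) else 0))
          + ((if a = b then (1:ℂ) else 0) * (∑ j ∈ Finset.range d, z ^ (j+1) * (β j c) b))
          - (z * fm a b) * (if b = c then (1:ℂ) else 0)
          - (z * fm a b) * (∑ j ∈ Finset.range d, z ^ (j+1) * (β j c) b) := by
      intro b
      rw [hYz a b, hP b]
      ring
    rw [Finset.sum_congr rfl fun b _ => hexp b]
    have e1 : (∑ b : Fin p, (if a = b then (1:ℂ) else 0) * (if b = c then (1:ℂ) else 0))
        = if a = c then 1 else 0 := by
      simp [ite_mul, Finset.sum_ite_eq]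
    have e2 : (∑ b : Fin p, (if a = b then (1:ℂ) else 0)
          * (∑ j ∈ Finset.range d, z ^ (j+1) * (β j c) b))
        = ∑ j ∈ Finset.range d, z ^ (j+1) * (β j c) a := by
      simp [ite_mul, Finset.sum_ite_eq]
    have e3 : (∑ b : Fin p, (z * fm a b) * (if b = c then (1:ℂ) else 0))
        = z * fm a c := by
      simp [mul_ite, Finset.sum_ite_eq']
    have hswap : (∑ b : Fin p, (z * fm a b)
          * (∑ j ∈ Finset.range d, z ^ (j+1) * (β j c) b))
        = z * ∑ j ∈ Finset.range d, z ^ (j+1) * ∑ b, (β j c) b * fm a b := by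
      calc (∑ b : Fin p, (z * fm a b) * (∑ j ∈ Finset.range d, z ^ (j+1) * (β j c) b))
          = ∑ b : Fin p, ∑ j ∈ Finset.range d, (z * fm a b) * (z ^ (j+1) * (β j c) b) :=
            Finset.sum_congr rfl fun b _ => Finset.mul_sum _ _ _
      _ = ∑ j ∈ Finset.range d, ∑ b : Fin p, (z * fm a b) * (z ^ (j+1) * (β j c) b) :=
            Finset.sum_comm
      _ = ∑ j ∈ Finset.range d, z * (z ^ (j+1) * ∑ b, (β j c) b * fm a b) := by
            refine Finset.sum_congr rfl fun j _ => ?_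
            calc (∑ b : Fin p, (z * fm a b) * (z ^ (j+1) * (β j c) b))
                = ∑ b : Fin p, z * (z ^ (j+1) * ((β j c) b * fm a b)) :=
                  Finset.sum_congr rfl fun b _ => by ring
            _ = z * (z ^ (j+1) * ∑ b, (β j c) b * fm a b) := by
                  rw [← Finset.mul_sum, ← Finset.mul_sum]
      _ = z * ∑ j ∈ Finset.range d, z ^ (j+1) * ∑ b, (β j c) b * fm a b :=
            (Finset.mul_sum _ _ _).symm
    simp only [Finset.sum_sub_distrib, Finset.sum_add_distrib]
    rw [e1, e2, e3, hswap]
    have t := tele c a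
    have hSa : (∑ j ∈ Finset.range d, z ^ (j+1) * (β j c) a)
        = z * ∑ j ∈ Finset.range d, z ^ j * (β j c) a := by
      rw [Finset.mul_sum]
      exact Finset.sum_congr rfl fun j _ => by ring
    rw [hSa, t]
    ring
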